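/- Suppose (Γ₁, Γ₂, τ) is a τ-orthogonal union of Belavin–Drinfeld triples (Γ₁⁽ⁱ⁾, Γ₂⁽ⁱ⁾, τ⁽ⁱ⁾). Then R̄_GGS − R_s = Σ_i (R̄⁽ⁱ⁾_GGS − R_s) and R̄_J − R_s = Σ_i (R̄⁽ⁱ⁾_J − R_s), where R̄_GGS, R̄_J are built from the union and R̄⁽ⁱ⁾_GGS, R̄⁽ⁱ⁾_J from the i-th subtriple. -/

import Mathlib

namespace GGS

open Finset
open scoped Classical

noncomputable section

/-- `n × n` complex matrices, `Mat_n(ℂ)`. -/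
abbrev MatN (n : ℕ) := Matrix (Fin n) (Fin n) ℂ
/-- `Mat_n(ℂ) ⊗ Mat_n(ℂ)`, realized as matrices indexed by pairs. -/
abbrev MatT (n : ℕ) := Matrix (Fin n × Fin n) (Fin n × Fin n) ℂ
/-- `Mat_n(ℂ)^{⊗3}`. -/
abbrev MatT3 (n : ℕ) := Matrix (Fin n × Fin n × Fin n) (Fin n × Fin n × Fin n) ℂ

/-- Matrix unit `E_{ij}` (ℕ-indices; `0` if out of range). -/
def E (n i j : ℕ) : MatN n := fun a b => if (a : ℕ) = i ∧ (b : ℕ) = j then 1 else 0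

/-- Tensor (Kronecker) product of two `n × n` matrices. -/
def tens {n : ℕ} (A B : MatN n) : MatT n := fun p q => A p.1 q.1 * B p.2 q.2

/-- `M₂₁` : swap of the two tensor factors. -/
def swap21 {n : ℕ} (M : MatT n) : MatT n := fun p q => M (p.2, p.1) (q.2, q.1)

/-- The permutation (Casimir) element `P = Σ E_{ij} ⊗ E_{ji}`. -/
def Pm (n : ℕ) : MatT n := ∑ i ∈ range n, ∑ j ∈ range n, tens (E n i j) (E n j i)

/-- `P⁰ = Σ E_{ii} ⊗ E_{ii}`. -/
def P0 (n : ℕ) : MatT n := ∑ i ∈ range n, tens (E n i i) (E n i i)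

/-- `M₁₂ = M ⊗ 1`. -/
def lift12 {n : ℕ} (M : MatT n) : MatT3 n :=
  fun p q => M (p.1, p.2.1) (q.1, q.2.1) * (if p.2.2 = q.2.2 then 1 else 0)

/-- `M₁₃`. -/
def lift13 {n : ℕ} (M : MatT n) : MatT3 n :=
  fun p q => M (p.1, p.2.2) (q.1, q.2.2) * (if p.2.1 = q.2.1 then 1 else 0)

/-- `M₂₃ = 1 ⊗ M`. -/
def lift23 {n : ℕ} (M : MatT n) : MatT3 n :=
  fun p q => M (p.2.1, p.2.2) (q.2.1, q.2.2) * (if p.1 = q.1 then 1 else 0)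

/-- The quantum Yang–Baxter equation `R₁₂R₁₃R₂₃ = R₂₃R₁₃R₁₂`. -/
def QYBE {n : ℕ} (M : MatT n) : Prop :=
  lift12 M * lift13 M * lift23 M = lift23 M * lift13 M * lift12 M

/-- The Hecke relation `(PR − q)(PR + q⁻¹) = 0`. -/
def Hecke {n : ℕ} (q : ℝ) (M : MatT n) : Prop :=
  (Pm n * M - (q : ℂ) • (1 : MatT n)) * (Pm n * M + (q : ℂ)⁻¹ • (1 : MatT n)) = 0

/-- Standard basis vector `e_i` of `ℂⁿ` (as a function on indices). -/
def evec (i : ℕ) : ℕ → ℂ := fun k => if k = i then 1 else 0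
/-- The root vector `e_i − e_j`. -/
def rvec (i j : ℕ) : ℕ → ℂ := evec i - evec j
/-- The simple root `α_i = e_i − e_{i+1}` (0-based indexing). -/
def svec (i : ℕ) : ℕ → ℂ := rvec i (i + 1)
/-- The inner product on `ℂⁿ` for which `(e_i)` is orthonormal (restricted to real vectors). -/
def ipn (n : ℕ) (x y : ℕ → ℂ) : ℂ := ∑ k ∈ range n, x k * y k

/-- A Belavin–Drinfeld triple of type `A_{n−1}`; simple roots are indexed `0,…,n−2`
(0-based: index `i` stands for `α_i = e_i − e_{i+1}`). -/
structure BDTriple (n : ℕ) where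
  Γ1 : Finset ℕ
  Γ2 : Finset ℕ
  τ : ℕ → ℕ
  mem1 : ∀ i ∈ Γ1, i + 1 < n
  mem2 : ∀ i ∈ Γ2, i + 1 < n
  bij : Set.BijOn τ ↑Γ1 ↑Γ2
  isometry : ∀ i ∈ Γ1, ∀ j ∈ Γ1, ipn n (svec (τ i)) (svec (τ j)) = ipn n (svec i) (svec j)
  nilp : ∀ i ∈ Γ1, ∃ k ≥ 1, τ^[k] i ∉ Γ1

variable {n : ℕ}

/-- The positive root `e_i − e_j` (`i < j`) lies in `Γ̃₁` (the positive part of `Span Γ₁`). -/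
def SpanRoot (T : BDTriple n) (i j : ℕ) : Prop :=
  i < j ∧ ∀ k, i ≤ k → k < j → k ∈ T.Γ1

/-- `q = τ(p)` for positive roots, via the additive extension of `τ` to `Γ̃₁`. -/
def tauStep (T : BDTriple n) (p q : ℕ × ℕ) : Prop :=
  SpanRoot T p.1 p.2 ∧ q.1 < q.2 ∧ rvec q.1 q.2 = ∑ k ∈ Finset.Ico p.1 p.2, svec (T.τ k)

/-- `q = τᵏ(p)`. -/
def precK (T : BDTriple n) : ℕ → ℕ × ℕ → ℕ × ℕ → Prop
  | 0, p, q => p = q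
  | k + 1, p, q => ∃ r, tauStep T p r ∧ precK T k r q

/-- `p ≺ q`, i.e. `q = τᵏ p` for some `k ≥ 1`. -/
def prec (T : BDTriple n) (p q : ℕ × ℕ) : Prop := ∃ k, precK T (k + 1) p q

/-- `p ≺← q` : `q = τᵏ p` and `τᵏ` reverses orientation on `p`. -/
def RevOri (T : BDTriple n) (p q : ℕ × ℕ) : Prop :=
  ∃ k, precK T (k + 1) p q ∧ T.τ^[k + 1] p.1 = q.2 - 1

/-- `p ≺→ q` : `q = τᵏ p` and `τᵏ` preserves orientation on `p`. -/
def PresOri (T : BDTriple n) (p q : ℕ × ℕ) : Prop :=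
  ∃ k, precK T (k + 1) p q ∧ T.τ^[k + 1] p.1 = q.1

/-- `sign(α,β)` : `(−1)^{1−|α|}` in the orientation-reversing case, `1` otherwise. -/
def sgn (T : BDTriple n) (p q : ℕ × ℕ) : ℂ :=
  if RevOri T p q then (-1 : ℂ) ^ (p.2 - p.1 - 1) else 1

/-- Sum over all pairs of (would-be) positive roots with indices `< n`. -/
def sumRoots (n : ℕ) (f : ℕ × ℕ → ℕ × ℕ → MatT n) : MatT n :=
  ∑ i ∈ range n, ∑ j ∈ range n, ∑ k ∈ range n, ∑ l ∈ range n, f (i, j) (k, l)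

/-- `a = Σ_{α≺β} sign(α,β) (e_{−α} ⊗ e_β − e_β ⊗ e_{−α})`. -/
def aMat (T : BDTriple n) : MatT n :=
  sumRoots n fun p q =>
    if prec T p q then
      sgn T p q • (tens (E n p.2 p.1) (E n q.1 q.2) - tens (E n q.1 q.2) (E n p.2 p.1))
    else 0

/-- `r_s = ½ P⁰ + Σ_{α>0} e_{−α} ⊗ e_α`. -/
def rsMat (n : ℕ) : MatT n :=
  (1 / 2 : ℂ) • P0 n +
    ∑ i ∈ range n, ∑ j ∈ range n, if i < j then tens (E n j i) (E n i j) else 0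

/-- `ε = a r_s + r_s a + a²`. -/
def epsMat (T : BDTriple n) : MatT n :=
  aMat T * rsMat n + rsMat n * aMat T + aMat T * aMat T

/-- Entry of a tensor-square matrix, with ℕ indices. -/
def entry (M : MatT n) (a b c d : ℕ) : ℂ :=
  if h : a < n ∧ b < n ∧ c < n ∧ d < n then
    M (⟨a, h.1⟩, ⟨b, h.2.1⟩) (⟨c, h.2.2.1⟩, ⟨d, h.2.2.2⟩)
  else 0

/-- The coefficient of `e_β ⊗ e_{−α}` in `M` (here `p = α`, `q = β`). -/
def coeffBA (M : MatT n) (p q : ℕ × ℕ) : ℂ := entry M q.1 p.2 q.2 p.1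

/-- `q^z = exp(z · ln q)`. -/
def qpow (q : ℝ) (z : ℂ) : ℂ := Complex.exp (z * (Real.log q : ℂ))

/-- The coefficients `K_{α,β}`. -/
def Kc (T : BDTriple n) (p q : ℕ × ℕ) : ℂ :=
  (if p.2 = q.1 then (1 / 2 : ℂ) else 0) - (if q.2 = p.1 then (1 / 2 : ℂ) else 0)
    + (if ∃ g : ℕ × ℕ, prec T p g ∧ prec T g q ∧ p.2 = g.1 then 1 else 0)
    - (if ∃ g : ℕ × ℕ, prec T p g ∧ prec T g q ∧ g.2 = p.1 then 1 else 0)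
    + (if RevOri T p q then 1 - ((p.2 - p.1 : ℕ) : ℂ) else 0)

/-- `Jⁱ = 1 + (q − q⁻¹) Σ_{β = τⁱα} sign(α,β) q^{K_{α,β}} e_β ⊗ e_{−α}`. -/
def Jlevel (q : ℝ) (T : BDTriple n) (i : ℕ) : MatT n :=
  1 + sumRoots n fun p r =>
    if precK T i p r then
      (((q : ℂ) - (q : ℂ)⁻¹) * sgn T p r * qpow q (Kc T p r)) • tens (E n r.1 r.2) (E n p.2 p.1)
    else 0

/-- `J = J¹ J² ⋯` (levels beyond the maximal power of `τ` contribute the identity). -/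
def Jmat (q : ℝ) (T : BDTriple n) : MatT n :=
  ((List.range n).map fun i => Jlevel q T (i + 1)).prod

/-- The standard Drinfeld–Jimbo `R`-matrix `R_s`. -/
def RsQ (n : ℕ) (q : ℝ) : MatT n :=
  (q : ℂ) • P0 n
    + (∑ i ∈ range n, ∑ j ∈ range n, if i ≠ j then tens (E n i i) (E n j j) else 0)
    + ((q : ℂ) - (q : ℂ)⁻¹) •
        (∑ i ∈ range n, ∑ j ∈ range n, if j < i then tens (E n i j) (E n j i) else 0)

/-- `e_{−α} ∧_c e_β = q^{−c} e_{−α} ⊗ e_β − q^c e_β ⊗ e_{−α}` (`p = α`, `r = β`). -/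
def wedgeC {n : ℕ} (q : ℝ) (c : ℂ) (p r : ℕ × ℕ) : MatT n :=
  qpow q (-c) • tens (E n p.2 p.1) (E n r.1 r.2) - qpow q c • tens (E n r.1 r.2) (E n p.2 p.1)

/-- `R̄_GGS = R_s + (q−q⁻¹) Σ_{α≺β} sign(α,β) e_{−α} ∧_{−sign(α,β) ε_{α,β}} e_β`. -/
def RbarGGS (q : ℝ) (T : BDTriple n) : MatT n :=
  RsQ n q + ((q : ℂ) - (q : ℂ)⁻¹) •
    sumRoots n fun p r =>
      if prec T p r then
        sgn T p r • wedgeC q (-(sgn T p r) * coeffBA (epsMat T) p r) p r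
      else 0

/-- `R̄_J = J⁻¹ R_s J₂₁`. -/
def RbarJ (q : ℝ) (T : BDTriple n) : MatT n :=
  (Jmat q T)⁻¹ * RsQ n q * swap21 (Jmat q T)

/-- `q^{r⁰}` for a diagonal⊗diagonal `r⁰`. -/
def qr0 (n : ℕ) (q : ℝ) (r0 : ℕ → ℕ → ℂ) : MatT n :=
  ∑ i ∈ range n, ∑ j ∈ range n, qpow q (r0 i j) • tens (E n i i) (E n j j)

/-- `R_GGS = q^{r⁰} R̄_GGS q^{r⁰}`. -/
def RGGS (q : ℝ) (T : BDTriple n) (r0 : ℕ → ℕ → ℂ) : MatT n :=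
  qr0 n q r0 * RbarGGS q T * qr0 n q r0

/-- `R_J = q^{r⁰} R̄_J q^{r⁰}`. -/
def RJ (q : ℝ) (T : BDTriple n) (r0 : ℕ → ℕ → ℂ) : MatT n :=
  qr0 n q r0 * RbarJ q T * qr0 n q r0

/-- `r⁰ ∈ 𝔥 ∧ 𝔥`, i.e. the coefficient matrix is antisymmetric. -/
def Antisym (n : ℕ) (r0 : ℕ → ℕ → ℂ) : Prop := ∀ i < n, ∀ j < n, r0 i j = -r0 j i

/-- The Belavin–Drinfeld compatibility equations
`((α − τα) ⊗ 1) r⁰ = ½ ((α + τα) ⊗ 1) P⁰` for all `α ∈ Γ₁`, written componentwise. -/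
def Compat (T : BDTriple n) (r0 : ℕ → ℕ → ℂ) : Prop :=
  ∀ s ∈ T.Γ1, ∀ j < n,
    r0 s j - r0 (s + 1) j - r0 (T.τ s) j + r0 (T.τ s + 1) j
      = (1 / 2 : ℂ) *
        ((if j = s then 1 else 0) - (if j = s + 1 then 1 else 0)
          + (if j = T.τ s then 1 else 0) - (if j = T.τ s + 1 then 1 else 0))

/-- `a₊ⁱ` : the part of `a₊` supported on pairs with `β = τⁱα`. -/
def aPlusLev (T : BDTriple n) (i : ℕ) : MatT n :=
  sumRoots n fun p r =>
    if precK T i p r then (-(sgn T p r)) • tens (E n r.1 r.2) (E n p.2 p.1) else 0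

/-- `a₊ = Σ_{α≺β} (−sign(α,β)) e_β ⊗ e_{−α}`. -/
def aPlus (T : BDTriple n) : MatT n :=
  sumRoots n fun p r =>
    if prec T p r then (-(sgn T p r)) • tens (E n r.1 r.2) (E n p.2 p.1) else 0

/-- `a₋ = Σ_{α≺β} sign(α,β) e_{−α} ⊗ e_β`. -/
def aMinus (T : BDTriple n) : MatT n :=
  sumRoots n fun p r =>
    if prec T p r then sgn T p r • tens (E n p.2 p.1) (E n r.1 r.2) else 0

/-- `P₊ = Σ_{i<j} E_{ij}⊗E_{ji} + ½P⁰`. -/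
def PPlus (n : ℕ) : MatT n :=
  (∑ i ∈ range n, ∑ j ∈ range n, if i < j then tens (E n i j) (E n j i) else 0)
    + (1 / 2 : ℂ) • P0 n

/-- `P₋ = Σ_{i>j} E_{ij}⊗E_{ji} + ½P⁰`. -/
def PMinus (n : ℕ) : MatT n :=
  (∑ i ∈ range n, ∑ j ∈ range n, if j < i then tens (E n i j) (E n j i) else 0)
    + (1 / 2 : ℂ) • P0 n

/-- The matrix `Σ_{i≥j} a₊ⁱa₊ʲ − Σ_{i<j} a₊ⁱa₊ʲ + a₊P₋ + a₋P₊ + P₊a₊ + a₊a₋ − a₋a₊`. -/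
def Mmat (T : BDTriple n) : MatT n :=
  (∑ i ∈ range n, ∑ j ∈ range n, if j ≤ i then aPlusLev T (i + 1) * aPlusLev T (j + 1) else 0)
    - (∑ i ∈ range n, ∑ j ∈ range n, if i < j then aPlusLev T (i + 1) * aPlusLev T (j + 1) else 0)
    + aPlus T * PMinus n + aMinus T * PPlus n + PPlus n * aPlus T
    + aPlus T * aMinus T - aMinus T * aPlus T

/-- `L_{α,β}` : `½` if `α ⋖ β`, `−½` if `α ⋗ β`, `0` otherwise. -/
def Lc (p r : ℕ × ℕ) : ℂ :=
  if p.2 = r.1 then 1 / 2 else if r.2 = p.1 then -(1 / 2) else 0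

/-- The part of `M` (viewed on the basis `e_{τα} ⊗ e_{−α}`, `α ∈ Γ̃₁`) supported on
pairs with `α ⋗ τα`. -/
def partGtr (T : BDTriple n) (M : MatT n) : MatT n :=
  sumRoots n fun p r =>
    if tauStep T p r ∧ r.2 = p.1 then coeffBA M p r • tens (E n r.1 r.2) (E n p.2 p.1) else 0

/-- The part of `M` (viewed on the basis `e_{−α} ⊗ e_{τα}`, `α ∈ Γ̃₁`) supported on
pairs with `α ⋖ τα`. -/
def partLess21 (T : BDTriple n) (M : MatT n) : MatT n :=
  sumRoots n fun p r =>
    if tauStep T p r ∧ p.2 = r.1 then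
      entry M p.2 r.1 p.1 r.2 • tens (E n p.2 p.1) (E n r.1 r.2)
    else 0


/-! ### Auxiliary lemmas for Statement 8 -/

section Aux8

lemma matT_sum_apply {ι' : Type*} (s : Finset ι') (f : ι' → MatT n) (x y : Fin n × Fin n) :
    (∑ i ∈ s, f i) x y = ∑ i ∈ s, f i x y := by
  rw [Matrix.sum_apply]

lemma sumRoots_congr {f g : ℕ × ℕ → ℕ × ℕ → MatT n} (h : ∀ p q, f p q = g p q) :
    sumRoots n f = sumRoots n g := by
  unfold sumRoots; simp only [h]

lemma sumRoots_sum {ι' : Type*} (s : Finset ι') (f : ι' → ℕ × ℕ → ℕ × ℕ → MatT n) :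
    sumRoots n (fun p q => ∑ i ∈ s, f i p q) = ∑ i ∈ s, sumRoots n (f i) := by
  unfold sumRoots
  rw [show (∑ a ∈ range n, ∑ b ∈ range n, ∑ c ∈ range n, ∑ d ∈ range n,
        ∑ i ∈ s, f i (a, b) (c, d))
      = ∑ a ∈ range n, ∑ b ∈ range n, ∑ c ∈ range n, ∑ i ∈ s, ∑ d ∈ range n,
        f i (a, b) (c, d) from
    Finset.sum_congr rfl fun a _ => Finset.sum_congr rfl fun b _ =>
      Finset.sum_congr rfl fun c _ => Finset.sum_comm]
  rw [show (∑ a ∈ range n, ∑ b ∈ range n, ∑ c ∈ range n, ∑ i ∈ s, ∑ d ∈ range n,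
        f i (a, b) (c, d))
      = ∑ a ∈ range n, ∑ b ∈ range n, ∑ i ∈ s, ∑ c ∈ range n, ∑ d ∈ range n,
        f i (a, b) (c, d) from
    Finset.sum_congr rfl fun a _ => Finset.sum_congr rfl fun b _ => Finset.sum_comm]
  rw [show (∑ a ∈ range n, ∑ b ∈ range n, ∑ i ∈ s, ∑ c ∈ range n, ∑ d ∈ range n,
        f i (a, b) (c, d))
      = ∑ a ∈ range n, ∑ i ∈ s, ∑ b ∈ range n, ∑ c ∈ range n, ∑ d ∈ range n,
        f i (a, b) (c, d) from
    Finset.sum_congr rfl fun a _ => Finset.sum_comm]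
  exact Finset.sum_comm

lemma svec_apply (s k : ℕ) :
    svec s k = (if k = s then (1 : ℂ) else 0) - (if k = s + 1 then 1 else 0) := rfl

lemma sum_svec_apply (B : Finset ℕ) (k : ℕ) :
    (∑ m ∈ B, svec m) k
      = (if k ∈ B then (1 : ℂ) else 0) - (if ∃ m ∈ B, k = m + 1 then 1 else 0) := by
  have h : (∑ m ∈ B, svec m) k = ∑ m ∈ B, svec m k := by simp [Finset.sum_apply]
  rw [h]
  simp only [svec_apply]
  rw [Finset.sum_sub_distrib]
  congr 1
  · simp [Finset.sum_ite_eq]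
  · cases k with
    | zero => simp
    | succ k' => simp [Nat.succ_inj, Finset.sum_ite_eq', eq_comm]

lemma finset_eq_of_sum_svec {B C : Finset ℕ}
    (h : (∑ m ∈ B, svec m) = ∑ m ∈ C, svec m) : B = C := by
  ext k
  induction k using Nat.strong_induction_on with
  | _ k ih =>
    have hk := congrFun h k
    rw [sum_svec_apply, sum_svec_apply] at hk
    have h2 : (if ∃ m ∈ B, k = m + 1 then (1 : ℂ) else 0)
        = (if ∃ m ∈ C, k = m + 1 then 1 else 0) := by
      cases k with
      | zero => simp
      | succ k' =>
        have hkk := ih k' (Nat.lt_succ_self k')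
        simp only [Nat.succ_inj]
        simp [hkk]
    rw [h2] at hk
    have h1 : (if k ∈ B then (1 : ℂ) else 0) = (if k ∈ C then 1 else 0) := by
      have := sub_left_injective hk
      exact this
    by_cases hB : k ∈ B <;> by_cases hC : k ∈ C <;> simp [hB, hC] at h1 ⊢

lemma sum_svec_Ico {a b : ℕ} (hab : a ≤ b) :
    (∑ m ∈ Finset.Ico a b, svec m) = rvec a b := by
  induction b, hab using Nat.le_induction with
  | base => simp [rvec]
  | succ b hab ih =>
    rw [Finset.sum_Ico_succ_top hab, ih]
    unfold rvec svec rvec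
    abel

lemma sum_delta (a b : ℕ) :
    (∑ k ∈ range n, (if k = a then (1 : ℂ) else 0) * (if k = b then 1 else 0))
      = if a = b ∧ a < n then 1 else 0 := by
  simp only [ite_mul, one_mul, zero_mul]
  rw [Finset.sum_ite_eq' (range n) a (fun k => if k = b then (1 : ℂ) else 0)]
  simp only [Finset.mem_range]
  split_ifs <;> first | rfl | omega

lemma ipn_svec {s t : ℕ} (hs : s + 1 < n) (ht : t + 1 < n) :
    ipn n (svec s) (svec t)
      = (if s = t then 2 else 0) - (if s + 1 = t then 1 else 0)
        - (if t + 1 = s then 1 else 0) := by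
  unfold ipn
  simp only [svec_apply, sub_mul, mul_sub]
  rw [Finset.sum_sub_distrib, Finset.sum_sub_distrib, Finset.sum_sub_distrib]
  rw [sum_delta, sum_delta, sum_delta, sum_delta]
  have h1 : s < n := by omega
  have h2 : s + 1 < n := hs
  split_ifs <;> first | omega | norm_num

end Aux8

section Orth

variable {ι : Type*} {Ts : ι → BDTriple n} {T : BDTriple n}

/-- Bundle of the τ-orthogonal-union hypotheses. -/
structure OrthHyp {n : ℕ} {ι : Type*} [Fintype ι] (Ts : ι → BDTriple n) (T : BDTriple n) :
    Prop where
  hc1 : T.Γ1 = Finset.univ.biUnion fun i => (Ts i).Γ1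
  hc2 : T.Γ2 = Finset.univ.biUnion fun i => (Ts i).Γ2
  htau : ∀ i, ∀ s ∈ (Ts i).Γ1, T.τ s = (Ts i).τ s
  horth1 : ∀ i j, i ≠ j → ∀ s ∈ (Ts i).Γ1, ∀ t ∈ (Ts j).Γ1, ipn n (svec s) (svec t) = 0
  horth2 : ∀ i j, i ≠ j → ∀ s ∈ (Ts i).Γ2, ∀ t ∈ (Ts j).Γ2, ipn n (svec s) (svec t) = 0
  htorth : ∀ i, ∀ s ∈ (Ts i).Γ2, s ∈ T.Γ1 → s ∈ (Ts i).Γ1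

variable [Fintype ι] (H : OrthHyp Ts T)
include H
set_option linter.unusedSectionVars false

lemma sep1 {i j : ι} (hij : i ≠ j) {s t : ℕ} (hs : s ∈ (Ts i).Γ1) (ht : t ∈ (Ts j).Γ1) :
    s ≠ t ∧ s + 1 ≠ t ∧ t + 1 ≠ s := by
  have h0 := H.horth1 i j hij s hs t ht
  rw [ipn_svec ((Ts i).mem1 s hs) ((Ts j).mem1 t ht)] at h0
  refine ⟨fun h => ?_, fun h => ?_, fun h => ?_⟩ <;>
    · subst h
      split_ifs at h0 <;> first | omega | norm_num at h0

lemma sep2 {i j : ι} (hij : i ≠ j) {s t : ℕ} (hs : s ∈ (Ts i).Γ2) (ht : t ∈ (Ts j).Γ2) :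
    s ≠ t ∧ s + 1 ≠ t ∧ t + 1 ≠ s := by
  have h0 := H.horth2 i j hij s hs t ht
  rw [ipn_svec ((Ts i).mem2 s hs) ((Ts j).mem2 t ht)] at h0
  refine ⟨fun h => ?_, fun h => ?_, fun h => ?_⟩ <;>
    · subst h
      split_ifs at h0 <;> first | omega | norm_num at h0

lemma comp1_eq {i j : ι} {s : ℕ} (hi : s ∈ (Ts i).Γ1) (hj : s ∈ (Ts j).Γ1) : i = j := by
  by_contra hij; exact (sep1 H hij hi hj).1 rfl

lemma adj1 {i j : ι} {s : ℕ} (hi : s ∈ (Ts i).Γ1) (hj : s + 1 ∈ (Ts j).Γ1) : i = j := by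
  by_contra hij; exact (sep1 H hij hi hj).2.1 rfl

lemma comp2_eq {i j : ι} {s : ℕ} (hi : s ∈ (Ts i).Γ2) (hj : s ∈ (Ts j).Γ2) : i = j := by
  by_contra hij; exact (sep2 H hij hi hj).1 rfl

lemma adj2 {i j : ι} {s : ℕ} (hi : s ∈ (Ts i).Γ2) (hj : s + 1 ∈ (Ts j).Γ2) : i = j := by
  by_contra hij; exact (sep2 H hij hi hj).2.1 rfl

lemma mem1_union {s : ℕ} : s ∈ T.Γ1 ↔ ∃ i, s ∈ (Ts i).Γ1 := by
  rw [H.hc1]; simp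

lemma comp21_eq {i j : ι} {s : ℕ} (hi : s ∈ (Ts i).Γ2) (hj : s ∈ (Ts j).Γ1) : i = j :=
  comp1_eq H (H.htorth i s hi ((mem1_union H).2 ⟨j, hj⟩)) hj

lemma spanRoot_up {i : ι} {a b : ℕ} (h : SpanRoot (Ts i) a b) : SpanRoot T a b :=
  ⟨h.1, fun k hk1 hk2 => (mem1_union H).2 ⟨i, h.2 k hk1 hk2⟩⟩

lemma spanRoot_down {a b : ℕ} (h : SpanRoot T a b) : ∃ i, SpanRoot (Ts i) a b := by
  obtain ⟨i, hi⟩ := (mem1_union H).1 (h.2 a le_rfl h.1)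
  refine ⟨i, h.1, ?_⟩
  intro k hk1
  induction k, hk1 using Nat.le_induction with
  | base => intro _; exact hi
  | succ k hk ih =>
    intro hk2
    have h1 := ih (by omega)
    obtain ⟨j, hj⟩ := (mem1_union H).1 (h.2 (k + 1) (by omega) hk2)
    obtain rfl := adj1 H h1 hj
    exact hj

lemma spanRoot_comp_eq {i j : ι} {a b : ℕ} (h1 : SpanRoot (Ts i) a b)
    (h2 : SpanRoot (Ts j) a b) : i = j :=
  comp1_eq H (h1.2 a le_rfl h1.1) (h2.2 a le_rfl h2.1)

lemma tauStep_up {i : ι} {p r : ℕ × ℕ} (h : tauStep (Ts i) p r) : tauStep T p r := by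
  refine ⟨spanRoot_up H h.1, h.2.1, ?_⟩
  rw [h.2.2]
  refine Finset.sum_congr rfl fun k hk => ?_
  rw [H.htau i k (h.1.2 k (Finset.mem_Ico.1 hk).1 (Finset.mem_Ico.1 hk).2)]

lemma tauStep_down {i : ι} {p r : ℕ × ℕ} (hcomp : SpanRoot (Ts i) p.1 p.2)
    (h : tauStep T p r) : tauStep (Ts i) p r := by
  refine ⟨hcomp, h.2.1, ?_⟩
  rw [h.2.2]
  refine Finset.sum_congr rfl fun k hk => ?_
  rw [H.htau i k (hcomp.2 k (Finset.mem_Ico.1 hk).1 (Finset.mem_Ico.1 hk).2)]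

lemma tauStep_image {i : ι} {p r : ℕ × ℕ} (h : tauStep (Ts i) p r) :
    Finset.image (Ts i).τ (Finset.Ico p.1 p.2) = Finset.Ico r.1 r.2 := by
  apply finset_eq_of_sum_svec
  rw [Finset.sum_image (fun x hx y hy hxy => (Ts i).bij.injOn
      (h.1.2 x (Finset.mem_Ico.1 hx).1 (Finset.mem_Ico.1 hx).2)
      (h.1.2 y (Finset.mem_Ico.1 hy).1 (Finset.mem_Ico.1 hy).2) hxy)]
  rw [← h.2.2, sum_svec_Ico (le_of_lt h.2.1)]

lemma tauStep_mem2 {i : ι} {p r : ℕ × ℕ} (h : tauStep (Ts i) p r) :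
    ∀ m ∈ Finset.Ico r.1 r.2, m ∈ (Ts i).Γ2 := by
  intro m hm
  rw [← tauStep_image H h] at hm
  obtain ⟨k, hk, rfl⟩ := Finset.mem_image.1 hm
  exact (Ts i).bij.mapsTo (h.1.2 k (Finset.mem_Ico.1 hk).1 (Finset.mem_Ico.1 hk).2)

lemma precK_up {i : ι} : ∀ (k : ℕ) {p r : ℕ × ℕ}, precK (Ts i) k p r → precK T k p r := by
  intro k
  induction k with
  | zero => intro p r h; exact h
  | succ k ih =>
    rintro p r ⟨m, hstep, hrest⟩
    exact ⟨m, tauStep_up H hstep, ih hrest⟩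

lemma precK_spanRoot {T' : BDTriple n} {k : ℕ} {p r : ℕ × ℕ} (h : precK T' (k + 1) p r) :
    SpanRoot T' p.1 p.2 := by
  obtain ⟨m, hstep, _⟩ := h
  exact hstep.1

lemma spanRoot_restrict {i : ι} {g : ℕ × ℕ}
    (h2 : ∀ m ∈ Finset.Ico g.1 g.2, m ∈ (Ts i).Γ2) (hs : SpanRoot T g.1 g.2) :
    SpanRoot (Ts i) g.1 g.2 :=
  ⟨hs.1, fun k hk1 hk2 =>
    H.htorth i k (h2 k (Finset.mem_Ico.2 ⟨hk1, hk2⟩)) (hs.2 k hk1 hk2)⟩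

lemma precK_down {i : ι} : ∀ (k : ℕ) {p r : ℕ × ℕ}, SpanRoot (Ts i) p.1 p.2 →
    precK T k p r → precK (Ts i) k p r := by
  intro k
  induction k with
  | zero => intro p r _ h; exact h
  | succ k ih =>
    rintro p r hcomp ⟨m, hstep, hrest⟩
    have hstep' := tauStep_down H hcomp hstep
    refine ⟨m, hstep', ?_⟩
    cases k with
    | zero => exact hrest
    | succ k' =>
      have hsm : SpanRoot T m.1 m.2 := precK_spanRoot H hrest
      exact ih (spanRoot_restrict H (tauStep_mem2 H hstep') hsm) hrest

lemma precK_target {i : ι} : ∀ (k : ℕ) {p r : ℕ × ℕ}, precK (Ts i) (k + 1) p r →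
    r.1 < r.2 ∧ ∀ m ∈ Finset.Ico r.1 r.2, m ∈ (Ts i).Γ2 := by
  intro k
  induction k with
  | zero =>
    rintro p r ⟨m, hstep, heq⟩
    have : m = r := heq
    subst this
    exact ⟨hstep.2.1, tauStep_mem2 H hstep⟩
  | succ k ih =>
    rintro p r ⟨m, hstep, hrest⟩
    exact ih hrest

lemma prec_up {i : ι} {p r : ℕ × ℕ} (h : prec (Ts i) p r) : prec T p r := by
  obtain ⟨k, hk⟩ := h; exact ⟨k, precK_up H _ hk⟩

lemma prec_spanRoot {T' : BDTriple n} {p r : ℕ × ℕ} (h : prec T' p r) :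
    SpanRoot T' p.1 p.2 := by
  obtain ⟨k, hk⟩ := h; exact precK_spanRoot H hk

lemma prec_down {i : ι} {p r : ℕ × ℕ} (hcomp : SpanRoot (Ts i) p.1 p.2)
    (h : prec T p r) : prec (Ts i) p r := by
  obtain ⟨k, hk⟩ := h; exact ⟨k, precK_down H _ hcomp hk⟩

lemma prec_target {i : ι} {p r : ℕ × ℕ} (h : prec (Ts i) p r) :
    r.1 < r.2 ∧ ∀ m ∈ Finset.Ico r.1 r.2, m ∈ (Ts i).Γ2 := by
  obtain ⟨k, hk⟩ := h; exact precK_target H k hk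

lemma prec_iff {p r : ℕ × ℕ} : prec T p r ↔ ∃ i, prec (Ts i) p r := by
  constructor
  · intro h
    obtain ⟨i, hcomp⟩ := spanRoot_down H (prec_spanRoot H h)
    exact ⟨i, prec_down H hcomp h⟩
  · rintro ⟨i, h⟩; exact prec_up H h

lemma iter_eq {i : ι} : ∀ (k : ℕ) {p r : ℕ × ℕ}, precK (Ts i) k p r →
    ∀ v ∈ Finset.Ico p.1 p.2,
      T.τ^[k] v = (Ts i).τ^[k] v ∧ (Ts i).τ^[k] v ∈ Finset.Ico r.1 r.2 := by
  intro k
  induction k with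
  | zero =>
    intro p r h v hv
    have : p = r := h
    subst this
    simpa using hv
  | succ k ih =>
    rintro p r ⟨m, hstep, hrest⟩ v hv
    have hv1 : v ∈ (Ts i).Γ1 :=
      hstep.1.2 v (Finset.mem_Ico.1 hv).1 (Finset.mem_Ico.1 hv).2
    have htv : T.τ v = (Ts i).τ v := H.htau i v hv1
    have hmem : (Ts i).τ v ∈ Finset.Ico m.1 m.2 := by
      rw [← tauStep_image H hstep]
      exact Finset.mem_image_of_mem _ hv
    have hih := ih hrest ((Ts i).τ v) hmem
    constructor
    · rw [Function.iterate_succ_apply, Function.iterate_succ_apply, htv]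
      exact hih.1
    · rw [Function.iterate_succ_apply]
      exact hih.2

lemma revOri_iff {i : ι} {p r : ℕ × ℕ} (hcomp : SpanRoot (Ts i) p.1 p.2) :
    RevOri T p r ↔ RevOri (Ts i) p r := by
  have hv : p.1 ∈ Finset.Ico p.1 p.2 := Finset.mem_Ico.2 ⟨le_rfl, hcomp.1⟩
  constructor
  · rintro ⟨k, hk, hiter⟩
    have hk' := precK_down H (k + 1) hcomp hk
    refine ⟨k, hk', ?_⟩
    rw [← (iter_eq H (k + 1) hk' p.1 hv).1]
    exact hiter
  · rintro ⟨k, hk, hiter⟩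
    refine ⟨k, precK_up H _ hk, ?_⟩
    rw [(iter_eq H (k + 1) hk p.1 hv).1]
    exact hiter

lemma sgn_eq {i : ι} {p r : ℕ × ℕ} (hcomp : SpanRoot (Ts i) p.1 p.2) :
    sgn T p r = sgn (Ts i) p r := by
  unfold sgn
  exact if_congr (revOri_iff H hcomp) rfl rfl

lemma prec_mid_comp {i : ι} {p g r : ℕ × ℕ} (h1 : prec (Ts i) p g) (h2 : prec T g r) :
    prec (Ts i) g r :=
  prec_down H (spanRoot_restrict H (prec_target H h1).2 (prec_spanRoot H h2)) h2

lemma kc_eq {i : ι} {p r : ℕ × ℕ} (hcomp : SpanRoot (Ts i) p.1 p.2) :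
    Kc T p r = Kc (Ts i) p r := by
  have e1 : (∃ g : ℕ × ℕ, prec T p g ∧ prec T g r ∧ p.2 = g.1)
      ↔ ∃ g : ℕ × ℕ, prec (Ts i) p g ∧ prec (Ts i) g r ∧ p.2 = g.1 := by
    constructor
    · rintro ⟨g, h1, h2, h3⟩
      have h1' := prec_down H hcomp h1
      exact ⟨g, h1', prec_mid_comp H h1' h2, h3⟩
    · rintro ⟨g, h1, h2, h3⟩
      exact ⟨g, prec_up H h1, prec_up H h2, h3⟩
  have e2 : (∃ g : ℕ × ℕ, prec T p g ∧ prec T g r ∧ g.2 = p.1)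
      ↔ ∃ g : ℕ × ℕ, prec (Ts i) p g ∧ prec (Ts i) g r ∧ g.2 = p.1 := by
    constructor
    · rintro ⟨g, h1, h2, h3⟩
      have h1' := prec_down H hcomp h1
      exact ⟨g, h1', prec_mid_comp H h1' h2, h3⟩
    · rintro ⟨g, h1, h2, h3⟩
      exact ⟨g, prec_up H h1, prec_up H h2, h3⟩
  unfold Kc
  rw [if_congr e1 rfl rfl, if_congr e2 rfl rfl, if_congr (revOri_iff H hcomp) rfl rfl]

lemma prec_comp_unique {i j : ι} {p r r' : ℕ × ℕ} (h1 : prec (Ts i) p r)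
    (h2 : prec (Ts j) p r') : i = j :=
  spanRoot_comp_eq H (prec_spanRoot H h1) (prec_spanRoot H h2)

lemma precK_comp_unique {i j : ι} {k k' : ℕ} {p r r' : ℕ × ℕ}
    (h1 : precK (Ts i) (k + 1) p r) (h2 : precK (Ts j) (k' + 1) p r') : i = j :=
  spanRoot_comp_eq H (precK_spanRoot H h1) (precK_spanRoot H h2)

lemma prec_facts {i : ι} {p r : ℕ × ℕ} (h : prec (Ts i) p r) :
    p.1 < p.2 ∧ p.1 ∈ (Ts i).Γ1 ∧ (∃ m ∈ (Ts i).Γ1, p.2 = m + 1) ∧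
    r.1 < r.2 ∧ r.1 ∈ (Ts i).Γ2 ∧ ∃ m ∈ (Ts i).Γ2, r.2 = m + 1 := by
  have hs := prec_spanRoot H h
  obtain ⟨hlt, hmem⟩ := prec_target H h
  have hp : p.1 < p.2 := hs.1
  have e1 : p.2 - 1 ∈ (Ts i).Γ1 := hs.2 (p.2 - 1) (by omega) (by omega)
  have e2 : r.2 - 1 ∈ (Ts i).Γ2 := hmem (r.2 - 1) (Finset.mem_Ico.2 ⟨by omega, by omega⟩)
  exact ⟨hp, hs.2 p.1 le_rfl hp, ⟨p.2 - 1, e1, by omega⟩, hlt,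
    hmem r.1 (Finset.mem_Ico.2 ⟨le_rfl, hlt⟩), ⟨r.2 - 1, e2, by omega⟩⟩

end Orth

section Supp

/-- Support predicate for matrices of "`e_β ⊗ e_{−α}`" type w.r.t. a component with
positive part `G1` and image part `G2`. -/
def SuppBA (G1 G2 : Finset ℕ) (M : MatT n) : Prop :=
  ∀ x y : Fin n × Fin n, M x y ≠ 0 →
    (x.1 : ℕ) ∈ G2 ∧ (∃ m ∈ G2, (y.1 : ℕ) = m + 1) ∧ x.1 < y.1 ∧
    (y.2 : ℕ) ∈ G1 ∧ (∃ m ∈ G1, (x.2 : ℕ) = m + 1) ∧ y.2 < x.2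

/-- Two-sided support predicate for `a`-type matrices. -/
def SuppA (G1 G2 : Finset ℕ) (M : MatT n) : Prop :=
  ∀ x y : Fin n × Fin n, M x y ≠ 0 →
    ((∃ m ∈ G1, (x.1 : ℕ) = m + 1) ∧ (y.1 : ℕ) ∈ G1 ∧ y.1 < x.1 ∧
      (x.2 : ℕ) ∈ G2 ∧ (∃ m ∈ G2, (y.2 : ℕ) = m + 1) ∧ x.2 < y.2)
    ∨ ((x.1 : ℕ) ∈ G2 ∧ (∃ m ∈ G2, (y.1 : ℕ) = m + 1) ∧ x.1 < y.1 ∧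
      (y.2 : ℕ) ∈ G1 ∧ (∃ m ∈ G1, (x.2 : ℕ) = m + 1) ∧ y.2 < x.2)

variable {G1 G2 : Finset ℕ}

lemma suppBA_zero : SuppBA G1 G2 (0 : MatT n) := fun x y h => absurd rfl h

lemma suppBA_add {M N : MatT n} (hM : SuppBA G1 G2 M) (hN : SuppBA G1 G2 N) :
    SuppBA G1 G2 (M + N) := by
  intro x y h
  rcases ne_or_eq (M x y) 0 with h1 | h1
  · exact hM x y h1
  · refine hN x y fun h2 => h ?_
    show M x y + N x y = 0
    rw [h1, h2, add_zero]

lemma suppBA_sum {ι' : Type*} {s : Finset ι'} {f : ι' → MatT n}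
    (h : ∀ i ∈ s, SuppBA G1 G2 (f i)) : SuppBA G1 G2 (∑ i ∈ s, f i) := by
  classical
  induction s using Finset.induction_on with
  | empty => simpa using suppBA_zero
  | insert _ _ hx ih =>
    rw [Finset.sum_insert hx]
    exact suppBA_add (h _ (Finset.mem_insert_self _ _))
      (ih fun i hi => h i (Finset.mem_insert_of_mem hi))

lemma suppBA_neg {M : MatT n} (hM : SuppBA G1 G2 M) : SuppBA G1 G2 (-M) := by
  intro x y h
  refine hM x y fun h2 => h ?_
  show -(M x y) = 0
  rw [h2, neg_zero]

lemma suppBA_mul {M N : MatT n} (hM : SuppBA G1 G2 M) (hN : SuppBA G1 G2 N) :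
    SuppBA G1 G2 (M * N) := by
  intro x y h
  rw [Matrix.mul_apply] at h
  obtain ⟨z, _, hz⟩ := Finset.exists_ne_zero_of_sum_ne_zero h
  obtain ⟨hMz, hNz⟩ := mul_ne_zero_iff.1 hz
  obtain ⟨a1, a2, a3, a4, a5, a6⟩ := hM x z hMz
  obtain ⟨b1, b2, b3, b4, b5, b6⟩ := hN z y hNz
  exact ⟨a1, b2, lt_trans a3 b3, b4, a5, lt_trans b6 a6⟩

lemma suppBA_mul_zero {G1' G2' : Finset ℕ} {M N : MatT n}
    (hsep : ∀ m, m ∈ G2 → ∀ m', m' ∈ G2' → m + 1 ≠ m')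
    (hM : SuppBA G1 G2 M) (hN : SuppBA G1' G2' N) : M * N = 0 := by
  ext x y
  rw [Matrix.mul_apply]
  refine Finset.sum_eq_zero fun z _ => ?_
  by_contra hz
  obtain ⟨hMz, hNz⟩ := mul_ne_zero_iff.1 hz
  obtain ⟨_, ⟨m, hm, hm1⟩, _, _, _, _⟩ := hM x z hMz
  obtain ⟨b1, _, _, _, _, _⟩ := hN z y hNz
  exact hsep m hm _ b1 (hm1 ▸ rfl)

lemma pow_eq_zero_of_lt {M : MatT n}
    (h : ∀ x y : Fin n × Fin n, M x y ≠ 0 → x.1 < y.1) : M ^ n = 0 := by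
  have key : ∀ (k : ℕ) (x y : Fin n × Fin n), (M ^ k) x y ≠ 0 → (x.1 : ℕ) + k ≤ (y.1 : ℕ) := by
    intro k
    induction k with
    | zero =>
      intro x y h0
      have : (1 : MatT n) x y ≠ 0 := by simpa using h0
      have hxy : x = y := by
        by_contra hne
        exact this (Matrix.one_apply_ne hne)
      subst hxy; omega
    | succ k ih =>
      intro x y h0
      rw [pow_succ, Matrix.mul_apply] at h0
      obtain ⟨z, _, hz⟩ := Finset.exists_ne_zero_of_sum_ne_zero h0
      obtain ⟨h1, h2⟩ := mul_ne_zero_iff.1 hz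
      have := ih x z h1
      have := h z y h2
      have : (z.1 : ℕ) < (y.1 : ℕ) := this
      omega
  ext x y
  by_contra h0
  have := key n x y h0
  have : (y.1 : ℕ) < n := y.1.isLt
  omega

lemma suppBA_lt {M : MatT n} (hM : SuppBA G1 G2 M) :
    ∀ x y : Fin n × Fin n, M x y ≠ 0 → x.1 < y.1 := fun x y h => (hM x y h).2.2.1

/-- Geometric-series inverse of a unipotent matrix `1 + M`. -/
lemma geom_inverse {M : MatT n} (h : M ^ n = 0) :
    (1 + M) * (∑ k ∈ range n, (-M) ^ k) = 1 ∧
    (∑ k ∈ range n, (-M) ^ k) * (1 + M) = 1 := by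
  have hn : (-M) ^ n = 0 := by
    rw [neg_pow, h, mul_zero]
  have h1 := geom_sum_mul (-M) n
  have h2 := mul_geom_sum (-M) n
  rw [hn] at h1 h2
  have hne : (1 + M) = -(-M - 1) := by abel
  constructor
  · rw [hne, neg_mul, h2, neg_sub, sub_zero]
  · rw [hne, mul_neg, h1, neg_sub, sub_zero]

lemma suppBA_geom_tail {M : MatT n} (hM : SuppBA G1 G2 M) :
    SuppBA G1 G2 ((∑ k ∈ range n, (-M) ^ k) - 1) := by
  cases n with
  | zero =>
    intro x y
    exact x.1.elim0
  | succ m =>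
    rw [Finset.sum_range_succ']
    have : ∀ k : ℕ, SuppBA G1 G2 ((-M) ^ (k + 1)) := by
      intro k
      induction k with
      | zero => simpa using suppBA_neg hM
      | succ k ih =>
        rw [pow_succ]
        exact suppBA_mul ih (suppBA_neg hM)
    have h0 : ((-M) ^ 0 : MatT (m+1)) = 1 := pow_zero _
    rw [h0, add_sub_cancel_right]
    exact suppBA_sum fun k _ => this k

/-- Entry extraction from a `sumRoots`. -/
lemma sumRoots_apply_ne {f : ℕ × ℕ → ℕ × ℕ → MatT n} {x y : Fin n × Fin n}
    (h : sumRoots n f x y ≠ 0) : ∃ p q : ℕ × ℕ, f p q x y ≠ 0 := by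
  unfold sumRoots at h
  simp only [matT_sum_apply] at h
  obtain ⟨a, _, h⟩ := Finset.exists_ne_zero_of_sum_ne_zero h
  obtain ⟨b, _, h⟩ := Finset.exists_ne_zero_of_sum_ne_zero h
  obtain ⟨c, _, h⟩ := Finset.exists_ne_zero_of_sum_ne_zero h
  obtain ⟨d, _, h⟩ := Finset.exists_ne_zero_of_sum_ne_zero h
  exact ⟨(a, b), (c, d), h⟩

lemma tens_E_ne {a b c d : ℕ} {x y : Fin n × Fin n}
    (h : tens (E n a b) (E n c d) x y ≠ 0) :
    (x.1 : ℕ) = a ∧ (y.1 : ℕ) = b ∧ (x.2 : ℕ) = c ∧ (y.2 : ℕ) = d := by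
  have h3 : ((if (x.1 : ℕ) = a ∧ (y.1 : ℕ) = b then (1 : ℂ) else 0) *
      (if (x.2 : ℕ) = c ∧ (y.2 : ℕ) = d then 1 else 0)) ≠ 0 := h
  by_cases h4 : (x.1 : ℕ) = a ∧ (y.1 : ℕ) = b
  · by_cases h5 : (x.2 : ℕ) = c ∧ (y.2 : ℕ) = d
    · exact ⟨h4.1, h4.2, h5.1, h5.2⟩
    · rw [if_neg h5, mul_zero] at h3; exact absurd rfl h3
  · rw [if_neg h4, zero_mul] at h3; exact absurd rfl h3

lemma smul_tens_E_ne {co : ℂ} {a b c d : ℕ} {x y : Fin n × Fin n}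
    (h : (co • tens (E n a b) (E n c d)) x y ≠ 0) :
    (x.1 : ℕ) = a ∧ (y.1 : ℕ) = b ∧ (x.2 : ℕ) = c ∧ (y.2 : ℕ) = d := by
  refine tens_E_ne fun h0 => h ?_
  show co • tens (E n a b) (E n c d) x y = 0
  rw [h0, smul_zero]

lemma ite_ne {P : Prop} [Decidable P] {M : MatT n} {x y : Fin n × Fin n}
    (h : (if P then M else 0) x y ≠ 0) : P ∧ M x y ≠ 0 := by
  split_ifs at h with hP
  · exact ⟨hP, h⟩
  · exact absurd rfl h

/-- Support of `rsMat`. -/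
lemma rsMat_ne {x y : Fin n × Fin n} (h : rsMat n x y ≠ 0) :
    ((x.1 : ℕ) = (y.1 : ℕ) ∧ (x.2 : ℕ) = (y.2 : ℕ) ∧ (x.1 : ℕ) = (x.2 : ℕ)) ∨
    ((y.1 : ℕ) = (x.2 : ℕ) ∧ (y.2 : ℕ) = (x.1 : ℕ) ∧ (x.2 : ℕ) < (x.1 : ℕ)) := by
  unfold rsMat at h
  rcases ne_or_eq (((1 / 2 : ℂ) • P0 n) x y) 0 with h1 | h1
  · left
    have h2 : P0 n x y ≠ 0 := fun h0 => h1 (by show (1/2 : ℂ) • P0 n x y = 0; rw [h0, smul_zero])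
    unfold P0 at h2
    rw [matT_sum_apply] at h2
    obtain ⟨i, _, hi⟩ := Finset.exists_ne_zero_of_sum_ne_zero h2
    obtain ⟨e1, e2, e3, e4⟩ := tens_E_ne hi
    exact ⟨by omega, by omega, by omega⟩
  · right
    have h2 : (∑ i ∈ range n, ∑ j ∈ range n,
        if i < j then tens (E n j i) (E n i j) else 0) x y ≠ 0 := by
      intro h0
      apply h
      show ((1 / 2 : ℂ) • P0 n) x y + _ = 0
      rw [h1, h0, add_zero]
    rw [matT_sum_apply] at h2
    obtain ⟨i, _, hi⟩ := Finset.exists_ne_zero_of_sum_ne_zero h2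
    rw [matT_sum_apply] at hi
    obtain ⟨j, _, hj⟩ := Finset.exists_ne_zero_of_sum_ne_zero hi
    obtain ⟨hij, hj2⟩ := ite_ne hj
    obtain ⟨e1, e2, e3, e4⟩ := tens_E_ne hj2
    exact ⟨by omega, by omega, by omega⟩

/-- Support of `RsQ`. -/
lemma rsQ_ne {q : ℝ} {x y : Fin n × Fin n} (h : RsQ n q x y ≠ 0) :
    ((x.1 : ℕ) = (y.1 : ℕ) ∧ (x.2 : ℕ) = (y.2 : ℕ)) ∨
    ((y.1 : ℕ) = (x.2 : ℕ) ∧ (y.2 : ℕ) = (x.1 : ℕ) ∧ (y.1 : ℕ) < (x.1 : ℕ)) := by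
  unfold RsQ at h
  have trich : (((q : ℂ) • P0 n) x y ≠ 0) ∨
      ((∑ i ∈ range n, ∑ j ∈ range n,
        if i ≠ j then tens (E n i i) (E n j j) else 0) x y ≠ 0) ∨
      ((((q : ℂ) - (q : ℂ)⁻¹) • ∑ i ∈ range n, ∑ j ∈ range n,
        if j < i then tens (E n i j) (E n j i) else 0) x y ≠ 0) := by
    by_contra hc
    push_neg at hc
    obtain ⟨c1, c2, c3⟩ := hc
    apply h
    show (((q : ℂ) • P0 n) + _) x y + _ = 0
    show (((q : ℂ) • P0 n) x y + _) + _ = 0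
    rw [c1, c2, c3, add_zero, add_zero]
  rcases trich with h1 | h1 | h1
  · left
    have h2 : P0 n x y ≠ 0 := fun h0 => h1 (by show (q:ℂ) • P0 n x y = 0; rw [h0, smul_zero])
    unfold P0 at h2
    rw [matT_sum_apply] at h2
    obtain ⟨i, _, hi⟩ := Finset.exists_ne_zero_of_sum_ne_zero h2
    obtain ⟨e1, e2, e3, e4⟩ := tens_E_ne hi
    exact ⟨by omega, by omega⟩
  · left
    rw [matT_sum_apply] at h1
    obtain ⟨i, _, hi⟩ := Finset.exists_ne_zero_of_sum_ne_zero h1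
    rw [matT_sum_apply] at hi
    obtain ⟨j, _, hj⟩ := Finset.exists_ne_zero_of_sum_ne_zero hi
    obtain ⟨hij, hj2⟩ := ite_ne hj
    obtain ⟨e1, e2, e3, e4⟩ := tens_E_ne hj2
    exact ⟨by omega, by omega⟩
  · right
    have h2 : (∑ i ∈ range n, ∑ j ∈ range n,
        if j < i then tens (E n i j) (E n j i) else 0) x y ≠ 0 := by
      intro h0
      apply h1
      show ((q : ℂ) - (q : ℂ)⁻¹) • (∑ i ∈ range n, ∑ j ∈ range n,
        if j < i then tens (E n i j) (E n j i) else 0) x y = 0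
      rw [h0, smul_zero]
    rw [matT_sum_apply] at h2
    obtain ⟨i, _, hi⟩ := Finset.exists_ne_zero_of_sum_ne_zero h2
    rw [matT_sum_apply] at hi
    obtain ⟨j, _, hj⟩ := Finset.exists_ne_zero_of_sum_ne_zero hi
    obtain ⟨hij, hj2⟩ := ite_ne hj
    obtain ⟨e1, e2, e3, e4⟩ := tens_E_ne hj2
    exact ⟨by omega, by omega, by omega⟩

lemma swap21_one : swap21 (1 : MatT n) = 1 := by
  ext x y
  unfold swap21
  rw [Matrix.one_apply, Matrix.one_apply]
  simp [Prod.ext_iff, and_comm]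

lemma swap21_add (M N : MatT n) : swap21 (M + N) = swap21 M + swap21 N := rfl

lemma swap21_sum {ι' : Type*} (s : Finset ι') (f : ι' → MatT n) :
    swap21 (∑ i ∈ s, f i) = ∑ i ∈ s, swap21 (f i) := by
  ext x y
  unfold swap21
  rw [matT_sum_apply]; exact (matT_sum_apply s (fun i => swap21 (f i)) x y).symm

lemma smul_apply_ne {c : ℂ} {M : MatT n} {x y : Fin n × Fin n}
    (h : (c • M) x y ≠ 0) : M x y ≠ 0 := by
  intro h0
  exact h (by show c • M x y = 0; rw [h0, smul_zero])

lemma sub_apply_ne {M N : MatT n} {x y : Fin n × Fin n}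
    (h : (M - N) x y ≠ 0) : M x y ≠ 0 ∨ N x y ≠ 0 := by
  by_contra hc
  push_neg at hc
  exact h (by show M x y - N x y = 0; rw [hc.1, hc.2, sub_zero])

end Supp

section Orth2

variable {ι : Type*} [Fintype ι] {Ts : ι → BDTriple n} {T : BDTriple n} (H : OrthHyp Ts T)
include H
set_option linter.unusedSectionVars false

lemma suppA_aMat (i : ι) : SuppA (Ts i).Γ1 (Ts i).Γ2 (aMat (Ts i)) := by
  intro x y h
  obtain ⟨p, r, h⟩ := sumRoots_apply_ne h
  obtain ⟨hprec, h2⟩ := ite_ne h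
  obtain ⟨hp, hp1, ⟨m0, hm0, hm0e⟩, hr, hr1, ⟨m1, hm1, hm1e⟩⟩ := prec_facts H hprec
  rcases sub_apply_ne (smul_apply_ne h2) with h4 | h4
  · obtain ⟨e1, e2, e3, e4⟩ := tens_E_ne h4
    left
    exact ⟨⟨m0, hm0, by omega⟩, by rw [e2]; exact hp1,
      by show (y.1 : ℕ) < (x.1 : ℕ); omega,
      by rw [e3]; exact hr1, ⟨m1, hm1, by omega⟩,
      by show (x.2 : ℕ) < (y.2 : ℕ); omega⟩
  · obtain ⟨e1, e2, e3, e4⟩ := tens_E_ne h4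
    right
    exact ⟨by rw [e1]; exact hr1, ⟨m1, hm1, by omega⟩,
      by show (x.1 : ℕ) < (y.1 : ℕ); omega,
      by rw [e4]; exact hp1, ⟨m0, hm0, by omega⟩,
      by show (y.2 : ℕ) < (x.2 : ℕ); omega⟩

lemma aMat_mul_zero {i j : ι} (hij : i ≠ j) : aMat (Ts i) * aMat (Ts j) = 0 := by
  ext x y
  rw [Matrix.mul_apply]
  refine Finset.sum_eq_zero fun z _ => ?_
  by_contra hz
  obtain ⟨h1, h2⟩ := mul_ne_zero_iff.1 hz
  rcases suppA_aMat H i x z h1 with ⟨_, c2, _, _, _, _⟩ | ⟨_, ⟨m, hm, hme⟩, _, _, _, _⟩ <;>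
    rcases suppA_aMat H j z y h2 with ⟨⟨m', hm', hme'⟩, _, _, _, _, _⟩ | ⟨c1', _, _, _, _, _⟩
  · exact hij (adj1 H hm' (hme' ▸ c2)).symm
  · exact hij (comp21_eq H c1' c2).symm
  · exact hij (comp21_eq H hm (by rwa [show m = m' by omega]))
  · exact hij (adj2 H hm (hme ▸ c1'))

lemma aMat_sum : aMat T = ∑ i, aMat (Ts i) := by
  unfold aMat
  rw [← sumRoots_sum]
  apply sumRoots_congr
  intro p r
  by_cases hp : prec T p r
  · obtain ⟨i0, h0⟩ := (prec_iff H).1 hp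
    rw [if_pos hp, Finset.sum_eq_single i0 ?h1 ?h2, if_pos h0,
      sgn_eq H (prec_spanRoot H h0)]
    case h1 =>
      intro j _ hj
      rw [if_neg]
      intro hc
      exact hj (prec_comp_unique H hc h0)
    case h2 => intro hc; exact absurd (Finset.mem_univ i0) hc
  · rw [if_neg hp]
    refine (Finset.sum_eq_zero fun j _ => ?_).symm
    exact if_neg fun hc => hp (prec_up H hc)

lemma epsMat_sum : epsMat T = ∑ i, epsMat (Ts i) := by
  unfold epsMat
  rw [aMat_sum H, Finset.sum_mul, Finset.mul_sum, Finset.sum_mul_sum]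
  have hd : (∑ i, ∑ j, aMat (Ts i) * aMat (Ts j)) = ∑ i, aMat (Ts i) * aMat (Ts i) := by
    refine Finset.sum_congr rfl fun i _ => ?_
    rw [Finset.sum_eq_single i (fun j _ hj => aMat_mul_zero H hj.symm)
      (fun hc => absurd (Finset.mem_univ i) hc)]
  rw [hd, ← Finset.sum_add_distrib, ← Finset.sum_add_distrib]

lemma coeffBA_sum {ι' : Type*} (s : Finset ι') (f : ι' → MatT n) (p r : ℕ × ℕ) :
    coeffBA (∑ i ∈ s, f i) p r = ∑ i ∈ s, coeffBA (f i) p r := by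
  unfold coeffBA entry
  by_cases hb : r.1 < n ∧ p.2 < n ∧ r.2 < n ∧ p.1 < n
  · simp only [dif_pos hb, matT_sum_apply]
  · simp only [dif_neg hb, Finset.sum_const_zero]

lemma eps_cross_entry {i j : ι} (hij : j ≠ i) {p r : ℕ × ℕ} (hpr : prec (Ts i) p r)
    (x y : Fin n × Fin n) (ex1 : (x.1 : ℕ) = r.1) (ex2 : (x.2 : ℕ) = p.2)
    (ey1 : (y.1 : ℕ) = r.2) (ey2 : (y.2 : ℕ) = p.1) : epsMat (Ts j) x y = 0 := by
  obtain ⟨hp, hp1, ⟨m0, hm0, hm0e⟩, hr, hr1, ⟨m1, hm1, hm1e⟩⟩ := prec_facts H hpr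
  have t1 : (aMat (Ts j) * rsMat n) x y = 0 := by
    rw [Matrix.mul_apply]
    refine Finset.sum_eq_zero fun z _ => ?_
    by_contra hz
    obtain ⟨h1, h2⟩ := mul_ne_zero_iff.1 hz
    rcases suppA_aMat H j x z h1 with ⟨_, c2, _, _, _, _⟩ | ⟨c1, _, _, _, _, _⟩
    · rcases rsMat_ne h2 with ⟨d1, d2, d3⟩ | ⟨d1, d2, d3⟩
      · exact hij (comp1_eq H c2 (by rw [show (z.1 : ℕ) = p.1 by omega]; exact hp1))
      · exact hij (comp1_eq H c2 (by rw [show (z.1 : ℕ) = p.1 by omega]; exact hp1))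
    · exact hij (comp2_eq H c1 (by rw [ex1]; exact hr1))
  have t2 : (rsMat n * aMat (Ts j)) x y = 0 := by
    rw [Matrix.mul_apply]
    refine Finset.sum_eq_zero fun z _ => ?_
    by_contra hz
    obtain ⟨h1, h2⟩ := mul_ne_zero_iff.1 hz
    rcases suppA_aMat H j z y h2 with ⟨_, _, _, c4, _, c6⟩ | ⟨_, _, _, c4', _, _⟩
    · rcases rsMat_ne h1 with ⟨d1, d2, d3⟩ | ⟨d1, d2, d3⟩
      · have c6' : (z.2 : ℕ) < (y.2 : ℕ) := c6
        omega
      · exact hij (comp2_eq H c4 (by rw [show (z.2 : ℕ) = r.1 by omega]; exact hr1))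
    · exact hij (comp1_eq H c4' (by rw [ey2]; exact hp1))
  have t3 : (aMat (Ts j) * aMat (Ts j)) x y = 0 := by
    rw [Matrix.mul_apply]
    refine Finset.sum_eq_zero fun z _ => ?_
    by_contra hz
    obtain ⟨h1, h2⟩ := mul_ne_zero_iff.1 hz
    rcases suppA_aMat H j x z h1 with ⟨_, _, _, _, _, c6⟩ | ⟨c1, _, _, _, _, _⟩
    · rcases suppA_aMat H j z y h2 with ⟨_, _, _, _, _, c6'⟩ | ⟨_, _, _, c4', _, _⟩
      · have o1 : (x.2 : ℕ) < (z.2 : ℕ) := c6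
        have o2 : (z.2 : ℕ) < (y.2 : ℕ) := c6'
        omega
      · exact hij (comp1_eq H c4' (by rw [ey2]; exact hp1))
    · exact hij (comp2_eq H c1 (by rw [ex1]; exact hr1))
  show (aMat (Ts j) * rsMat n + rsMat n * aMat (Ts j) + aMat (Ts j) * aMat (Ts j)) x y = 0
  show (aMat (Ts j) * rsMat n) x y + (rsMat n * aMat (Ts j)) x y
    + (aMat (Ts j) * aMat (Ts j)) x y = 0
  rw [t1, t2, t3, add_zero, add_zero]

lemma eps_cross {i j : ι} (hij : j ≠ i) {p r : ℕ × ℕ} (hpr : prec (Ts i) p r) :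
    coeffBA (epsMat (Ts j)) p r = 0 := by
  unfold coeffBA entry
  split
  case isTrue hb => exact eps_cross_entry H hij hpr _ _ rfl rfl rfl rfl
  case isFalse hb => rfl

lemma coeffBA_eps_eq {i : ι} {p r : ℕ × ℕ} (hpr : prec (Ts i) p r) :
    coeffBA (epsMat T) p r = coeffBA (epsMat (Ts i)) p r := by
  rw [epsMat_sum H, coeffBA_sum H]
  rw [Finset.sum_eq_single i (fun j _ hj => eps_cross H hj hpr)
    (fun hc => absurd (Finset.mem_univ i) hc)]

lemma ggs_part (q : ℝ) :
    RbarGGS q T - RsQ n q = ∑ i, (RbarGGS q (Ts i) - RsQ n q) := by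
  unfold RbarGGS
  simp only [add_sub_cancel_left]
  rw [← Finset.smul_sum, ← sumRoots_sum]
  congr 1
  apply sumRoots_congr
  intro p r
  by_cases hp : prec T p r
  · obtain ⟨i0, h0⟩ := (prec_iff H).1 hp
    have hcomp := prec_spanRoot H h0
    rw [if_pos hp, Finset.sum_eq_single i0 ?h1 ?h2, if_pos h0, sgn_eq H hcomp,
      coeffBA_eps_eq H h0]
    case h1 =>
      intro j _ hj
      rw [if_neg]
      intro hc
      exact hj (prec_comp_unique H hc h0)
    case h2 => intro hc; exact absurd (Finset.mem_univ i0) hc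
  · rw [if_neg hp]
    refine (Finset.sum_eq_zero fun j _ => ?_).symm
    exact if_neg fun hc => hp (prec_up H hc)

end Orth2

/-- The sum part of `Jlevel`. -/
def Jsum (q : ℝ) (T' : BDTriple n) (l : ℕ) : MatT n :=
  sumRoots n fun p r =>
    if precK T' l p r then
      (((q : ℂ) - (q : ℂ)⁻¹) * sgn T' p r * qpow q (Kc T' p r)) •
        tens (E n r.1 r.2) (E n p.2 p.1)
    else 0

lemma Jlevel_eq (q : ℝ) (T' : BDTriple n) (l : ℕ) : Jlevel q T' l = 1 + Jsum q T' l := rfl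

lemma Jlevel_sub_one (q : ℝ) (T' : BDTriple n) (l : ℕ) :
    Jlevel q T' l - 1 = Jsum q T' l := by
  rw [Jlevel_eq]; abel

lemma list_prod_sub_one {G1 G2 : Finset ℕ} :
    ∀ L : List (MatT n), (∀ A ∈ L, SuppBA G1 G2 (A - 1)) → SuppBA G1 G2 (L.prod - 1) := by
  intro L
  induction L with
  | nil =>
    intro _
    simpa using (suppBA_zero : SuppBA G1 G2 0)
  | cons A L ih =>
    intro h
    rw [List.prod_cons]
    have hA : SuppBA G1 G2 (A - 1) := h A List.mem_cons_self
    have hP : SuppBA G1 G2 (L.prod - 1) := ih fun B hB => h B (List.mem_cons_of_mem A hB)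
    have key : A * L.prod - 1
        = (A - 1) + (L.prod - 1) + (A - 1) * (L.prod - 1) := by noncomm_ring
    rw [key]
    exact suppBA_add (suppBA_add hA hP) (suppBA_mul hA hP)

section Orth3

variable {ι : Type*} [Fintype ι] {Ts : ι → BDTriple n} {T : BDTriple n} (H : OrthHyp Ts T)
include H
set_option linter.unusedSectionVars false

lemma suppBA_Jsum (q : ℝ) (i : ι) (l : ℕ) :
    SuppBA (Ts i).Γ1 (Ts i).Γ2 (Jsum q (Ts i) (l + 1)) := by
  intro x y h
  obtain ⟨p, r, h⟩ := sumRoots_apply_ne h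
  obtain ⟨hprecK, h2⟩ := ite_ne h
  obtain ⟨hp, hp1, ⟨m0, hm0, hm0e⟩, hr, hr1, ⟨m1, hm1, hm1e⟩⟩ :=
    prec_facts H (⟨l, hprecK⟩ : prec (Ts i) p r)
  obtain ⟨e1, e2, e3, e4⟩ := smul_tens_E_ne h2
  exact ⟨by rw [e1]; exact hr1, ⟨m1, hm1, by omega⟩,
    by show (x.1 : ℕ) < (y.1 : ℕ); omega,
    by rw [e4]; exact hp1, ⟨m0, hm0, by omega⟩,
    by show (y.2 : ℕ) < (x.2 : ℕ); omega⟩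

lemma Jsum_sum (q : ℝ) (l : ℕ) : Jsum q T (l + 1) = ∑ i, Jsum q (Ts i) (l + 1) := by
  unfold Jsum
  rw [← sumRoots_sum]
  apply sumRoots_congr
  intro p r
  by_cases hp : precK T (l + 1) p r
  · obtain ⟨i0, hcomp⟩ := spanRoot_down H (precK_spanRoot H hp)
    have h0 : precK (Ts i0) (l + 1) p r := precK_down H _ hcomp hp
    rw [if_pos hp, Finset.sum_eq_single i0 ?h1 ?h2, if_pos h0, sgn_eq H hcomp,
      kc_eq H hcomp]
    case h1 =>
      intro j _ hj
      rw [if_neg]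
      intro hc
      exact hj (precK_comp_unique H hc h0)
    case h2 => intro hc; exact absurd (Finset.mem_univ i0) hc
  · rw [if_neg hp]
    refine (Finset.sum_eq_zero fun j _ => ?_).symm
    exact if_neg fun hc => hp (precK_up H _ hc)

lemma suppBA_Jmat_sub_one (q : ℝ) (i : ι) :
    SuppBA (Ts i).Γ1 (Ts i).Γ2 (Jmat q (Ts i) - 1) := by
  unfold Jmat
  refine list_prod_sub_one _ fun A hA => ?_
  obtain ⟨l, _, rfl⟩ := List.mem_map.1 hA
  rw [Jlevel_sub_one]
  exact suppBA_Jsum H q i l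

lemma suppBA_sep {i j : ι} (hij : i ≠ j) :
    ∀ m, m ∈ (Ts i).Γ2 → ∀ m', m' ∈ (Ts j).Γ2 → m + 1 ≠ m' :=
  fun m hm m' hm' => (sep2 H hij hm hm').2.1

lemma jmat_decomp (q : ℝ) : Jmat q T = 1 + ∑ i, (Jmat q (Ts i) - 1) := by
  have main : ∀ L : List ℕ, ((L.map fun l => Jlevel q T (l + 1)).prod)
      = 1 + ∑ i, ((L.map fun l => Jlevel q (Ts i) (l + 1)).prod - 1) := by
    intro L
    induction L with
    | nil => simp
    | cons l L ih =>
      rw [List.map_cons, List.prod_cons, ih, Jlevel_eq, Jsum_sum H q l]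
      have hX : ∀ i : ι, SuppBA (Ts i).Γ1 (Ts i).Γ2 (Jsum q (Ts i) (l + 1)) :=
        fun i => suppBA_Jsum H q i l
      have hP : ∀ i : ι, SuppBA (Ts i).Γ1 (Ts i).Γ2
          (((L.map fun l => Jlevel q (Ts i) (l + 1)).prod) - 1) := by
        intro i
        refine list_prod_sub_one _ fun A hA => ?_
        obtain ⟨l', _, rfl⟩ := List.mem_map.1 hA
        rw [Jlevel_sub_one]
        exact suppBA_Jsum H q i l'
      set X : ι → MatT n := fun i => Jsum q (Ts i) (l + 1) with hXdef
      set P : ι → MatT n := fun i => ((L.map fun l => Jlevel q (Ts i) (l + 1)).prod) - 1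
        with hPdef
      have hprod : (∑ i, X i) * (∑ i, P i) = ∑ i, X i * P i := by
        rw [Finset.sum_mul_sum]
        refine Finset.sum_congr rfl fun i _ => ?_
        refine Finset.sum_eq_single i (fun j _ hj => ?_)
          (fun hc => absurd (Finset.mem_univ i) hc)
        exact suppBA_mul_zero (suppBA_sep H hj.symm) (hX i) (hP j)
      have expand : (1 + ∑ i, X i) * (1 + ∑ i, P i)
          = 1 + ((∑ i, X i) + (∑ i, P i) + (∑ i, X i) * (∑ i, P i)) := by noncomm_ring
      rw [expand, hprod, ← Finset.sum_add_distrib, ← Finset.sum_add_distrib]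
      congr 1
      refine Finset.sum_congr rfl fun i _ => ?_
      rw [List.map_cons, List.prod_cons, Jlevel_eq]
      show X i + P i + X i * P i = (1 + X i) * ((L.map fun l => Jlevel q (Ts i) (l + 1)).prod) - 1
      have : ((L.map fun l => Jlevel q (Ts i) (l + 1)).prod) = 1 + P i := by
        rw [hPdef]; noncomm_ring
      rw [this]
      noncomm_ring
  exact main (List.range n)

lemma j_part (q : ℝ) : RbarJ q T - RsQ n q = ∑ i, (RbarJ q (Ts i) - RsQ n q) := by
  classical
  set N : ι → MatT n := fun i => Jmat q (Ts i) - 1 with hNdef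
  have hNS : ∀ i, SuppBA (Ts i).Γ1 (Ts i).Γ2 (N i) := fun i => suppBA_Jmat_sub_one H q i
  set Minv : ι → MatT n := fun i => (∑ k ∈ range n, (-(N i)) ^ k) - 1 with hMdef
  have hMS : ∀ i, SuppBA (Ts i).Γ1 (Ts i).Γ2 (Minv i) := fun i => suppBA_geom_tail (hNS i)
  have hNpow : ∀ i, (N i) ^ n = 0 := fun i =>
    pow_eq_zero_of_lt (suppBA_lt (hNS i))
  have hgeom := fun i => geom_inverse (hNpow i)
  have hJi : ∀ i, Jmat q (Ts i) = 1 + N i := by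
    intro i; rw [hNdef]; noncomm_ring
  have he : ∀ i, (1 : MatT n) + Minv i = ∑ k ∈ range n, (-(N i)) ^ k := by
    intro i; rw [hMdef]; noncomm_ring
  have hinv_i : ∀ i, (Jmat q (Ts i))⁻¹ = 1 + Minv i := by
    intro i
    apply Matrix.inv_eq_right_inv
    rw [hJi i, he i]
    exact (hgeom i).1
  have key : ∀ i, N i + Minv i + N i * Minv i = 0 := by
    intro i
    have h1 := (hgeom i).1
    calc N i + Minv i + N i * Minv i = (1 + N i) * (1 + Minv i) - 1 := by noncomm_ring
    _ = (1 + N i) * (∑ k ∈ range n, (-(N i)) ^ k) - 1 := by rw [he i]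
    _ = 0 := by rw [h1]; exact sub_self 1
  have key2 : ∀ i, Minv i + N i + Minv i * N i = 0 := by
    intro i
    have h1 := (hgeom i).2
    calc Minv i + N i + Minv i * N i = (1 + Minv i) * (1 + N i) - 1 := by noncomm_ring
    _ = (∑ k ∈ range n, (-(N i)) ^ k) * (1 + N i) - 1 := by rw [he i]
    _ = 0 := by rw [h1]; exact sub_self 1
  have hprodNM : (∑ i, N i) * (∑ i, Minv i) = ∑ i, N i * Minv i := by
    rw [Finset.sum_mul_sum]
    refine Finset.sum_congr rfl fun i _ => ?_
    refine Finset.sum_eq_single i (fun j _ hj => ?_)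
      (fun hc => absurd (Finset.mem_univ i) hc)
    exact suppBA_mul_zero (suppBA_sep H hj.symm) (hNS i) (hMS j)
  have hprodMN : (∑ i, Minv i) * (∑ i, N i) = ∑ i, Minv i * N i := by
    rw [Finset.sum_mul_sum]
    refine Finset.sum_congr rfl fun i _ => ?_
    refine Finset.sum_eq_single i (fun j _ hj => ?_)
      (fun hc => absurd (Finset.mem_univ i) hc)
    exact suppBA_mul_zero (suppBA_sep H hj.symm) (hMS i) (hNS j)
  have hJT : Jmat q T = 1 + ∑ i, N i := jmat_decomp H q
  have hTR : (1 + ∑ i, N i) * (1 + ∑ i, Minv i) = 1 := by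
    have expand : (1 + ∑ i, N i) * (1 + ∑ i, Minv i)
        = 1 + ((∑ i, N i) + (∑ i, Minv i) + (∑ i, N i) * (∑ i, Minv i)) := by noncomm_ring
    rw [expand, hprodNM, ← Finset.sum_add_distrib, ← Finset.sum_add_distrib,
      Finset.sum_congr rfl fun i _ => key i]
    simp
  have hinvT : (Jmat q T)⁻¹ = 1 + ∑ i, Minv i :=
    Matrix.inv_eq_right_inv (by rw [hJT]; exact hTR)
  set B : ι → MatT n := fun i => swap21 (N i) with hBdef
  have hswapJT : swap21 (Jmat q T) = 1 + ∑ i, B i := by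
    rw [hJT, swap21_add, swap21_one, swap21_sum]
  have hRi : ∀ i, RbarJ q (Ts i) - RsQ n q
      = Minv i * RsQ n q + RsQ n q * B i + Minv i * RsQ n q * B i := by
    intro i
    unfold RbarJ
    rw [hinv_i i, hJi i, swap21_add, swap21_one]
    noncomm_ring
  unfold RbarJ
  rw [hinvT, hswapJT]
  have hL : (1 + ∑ i, Minv i) * RsQ n q * (1 + ∑ i, B i) - RsQ n q
      = (∑ i, Minv i) * RsQ n q + RsQ n q * (∑ i, B i)
        + (∑ i, Minv i) * RsQ n q * (∑ i, B i) := by noncomm_ring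
  have hjcross : ∀ i j, i ≠ j → Minv i * (RsQ n q * B j) = 0 := by
    intro i j hij
    ext x y
    rw [Matrix.mul_apply]
    refine Finset.sum_eq_zero fun z _ => ?_
    by_contra hz
    obtain ⟨h1, h2⟩ := mul_ne_zero_iff.1 hz
    obtain ⟨_, ⟨m, hm, hme⟩, _, _, _, _⟩ := hMS i x z h1
    rw [Matrix.mul_apply] at h2
    obtain ⟨w, _, hw⟩ := Finset.exists_ne_zero_of_sum_ne_zero h2
    obtain ⟨hRs, hsw⟩ := mul_ne_zero_iff.1 hw
    have hsw' : N j (w.2, w.1) (y.2, y.1) ≠ 0 := hsw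
    obtain ⟨b1, _, _, _, ⟨m', hm', hme'⟩, _⟩ := hNS j _ _ hsw'
    have b1' : (w.2 : ℕ) ∈ (Ts j).Γ2 := b1
    have hme'' : (w.1 : ℕ) = m' + 1 := hme'
    rcases rsQ_ne hRs with ⟨d1, d2⟩ | ⟨d1, d2, d3⟩
    · -- z = w on coords: z.1 = w.1 = m'+1, m' ∈ Γ1j; z.1 = m+1, m ∈ Γ2i
      exact hij (comp21_eq H hm (by rwa [show m = m' by omega]))
    · -- w.2 = z.1
      exact hij (adj2 H hm (by rw [show m + 1 = (w.2 : ℕ) by omega]; exact b1'))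
  have hcross : (∑ i, Minv i) * RsQ n q * (∑ i, B i) = ∑ i, Minv i * RsQ n q * B i := by
    rw [Finset.sum_mul, Finset.sum_mul_sum]
    refine Finset.sum_congr rfl fun i _ => ?_
    refine Finset.sum_eq_single i (fun j _ hj => ?_)
      (fun hc => absurd (Finset.mem_univ i) hc)
    rw [mul_assoc, hjcross i j (Ne.symm hj)]
  rw [hL, hcross, Finset.sum_mul, Finset.mul_sum,
    ← Finset.sum_add_distrib, ← Finset.sum_add_distrib]
  exact Finset.sum_congr rfl fun i _ => (hRi i).symm

end Orth3

/-- for a τ-orthogonal union, `R̄_GGS − R_s = Σ_i (R̄⁽ⁱ⁾_GGS − R_s)` and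
`R̄_J − R_s = Σ_i (R̄⁽ⁱ⁾_J − R_s)`. -/
theorem stmt_8 {n : ℕ} (hn : 2 ≤ n) (q : ℝ) (hq : 0 < q) (hq1 : q ≠ 1)
    {ι : Type*} [Fintype ι] (Ts : ι → BDTriple n) (T : BDTriple n)
    (hc1 : T.Γ1 = Finset.univ.biUnion fun i => (Ts i).Γ1)
    (hc2 : T.Γ2 = Finset.univ.biUnion fun i => (Ts i).Γ2)
    (htau : ∀ i, ∀ s ∈ (Ts i).Γ1, T.τ s = (Ts i).τ s)
    (horth1 : ∀ i j, i ≠ j → ∀ s ∈ (Ts i).Γ1, ∀ t ∈ (Ts j).Γ1,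
      ipn n (svec s) (svec t) = 0)
    (horth2 : ∀ i j, i ≠ j → ∀ s ∈ (Ts i).Γ2, ∀ t ∈ (Ts j).Γ2,
      ipn n (svec s) (svec t) = 0)
    (htorth : ∀ i, ∀ s ∈ (Ts i).Γ2, s ∈ T.Γ1 → s ∈ (Ts i).Γ1) :
    RbarGGS q T - RsQ n q = ∑ i, (RbarGGS q (Ts i) - RsQ n q) ∧
    RbarJ q T - RsQ n q = ∑ i, (RbarJ q (Ts i) - RsQ n q) := by
  have H : OrthHyp Ts T := ⟨hc1, hc2, htau, horth1, horth2, htorth⟩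
  exact ⟨ggs_part H q, j_part H q⟩

end
end GGS
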